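/- Let w be an ε-Beck word for some ε < 1 (all occurrences of every factor of length n > N_ε are separated by distance at least (2−ε)^n). Then w is not closed-rich: for every constant C > 0, every sufficiently long factor of w of length m contains fewer than C·m² closed factors; in fact, any factor of length m contains at most m·log_{2−ε}(m) closed factor occurrences that are rightmost occurrences. -/

import Mathlib

open List

variable {α : Type*}

/-- Number of occurrences of `u` as a factor of `w` (by starting position). -/
def occCount [DecidableEq α] (u w : List α) : ℕ :=
  ((Finset.range (w.length + 1)).filter
    (fun i => i + u.length ≤ w.length ∧ (w.drop i).take u.length = u)).card

/-- A finite word is closed if it has length ≤ 1 or it has a border occurring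
exactly twice in it (as prefix and as suffix). -/
def ClosedWord [DecidableEq α] (w : List α) : Prop :=
  w.length ≤ 1 ∨ ∃ k ∈ Finset.Ioo 0 w.length,
    (w.take k) <:+ w ∧ occCount (w.take k) w = 2

instance [DecidableEq α] (w : List α) : Decidable (ClosedWord w) := by
  unfold ClosedWord; infer_instance

/-- The finite set of distinct closed factors of `w`. -/
def closedFactors [DecidableEq α] (w : List α) : Finset (List α) :=
  (w.inits.flatMap List.tails).toFinset.filter ClosedWord

/-- The number of distinct closed factors of `w`. -/
def clCount [DecidableEq α] (w : List α) : ℕ := (closedFactors w).card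

/-- `t` is a period of the finite word `w`. -/
def HasPeriod (w : List α) (t : ℕ) : Prop := 0 < t ∧ w.drop t <+: w

/-- Factor of the infinite word `w` starting at `i` of length `m`. -/
def factorAt (w : ℕ → α) (i m : ℕ) : List α := (List.range m).map (fun j => w (i + j))

/-- `u` occurs in the infinite word `w` at position `i`. -/
def occursAt (w : ℕ → α) (u : List α) (i : ℕ) : Prop := factorAt w i u.length = u

/-- An infinite word is aperiodic if it is not eventually periodic. -/
def Aperiodic' (w : ℕ → α) : Prop := ¬ ∃ p, 0 < p ∧ ∃ N, ∀ n ≥ N, w (n + p) = w n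

/-- A finite word is primitive if it is not an integer power of a shorter word. -/
def Primitive (u : List α) : Prop :=
  u ≠ [] ∧ ∀ (v : List α) (k : ℕ), 2 ≤ k → u ≠ (List.replicate k v).flatten

-- helpers
lemma suffix_eq_of_length_eq {l₁ l₂ l : List α} (h1 : l₁ <:+ l) (h2 : l₂ <:+ l)
    (hl : l₁.length = l₂.length) : l₁ = l₂ :=
  (List.suffix_of_suffix_length_le h1 h2 hl.le).eq_of_length hl

lemma mem_closedFactors_iff [DecidableEq α] {u v : List α} :
    u ∈ closedFactors v ↔ (∃ e ≤ v.length, u <:+ v.take e) ∧ ClosedWord u := by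
  simp only [closedFactors, Finset.mem_filter, List.mem_toFinset, List.mem_flatMap,
    List.mem_inits, List.mem_tails, and_congr_left_iff]
  intro _
  constructor
  · rintro ⟨t, ht, hu⟩
    exact ⟨t.length, ht.length_le, (List.prefix_iff_eq_take.mp ht) ▸ hu⟩
  · rintro ⟨e, he, hu⟩
    exact ⟨v.take e, List.take_prefix _ _, hu⟩

lemma three_le_occCount [DecidableEq α] {p u : List α} {j₁ j₂ j₃ : ℕ}
    (h₁ : j₁ + p.length ≤ u.length ∧ (u.drop j₁).take p.length = p)
    (h₂ : j₂ + p.length ≤ u.length ∧ (u.drop j₂).take p.length = p)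
    (h₃ : j₃ + p.length ≤ u.length ∧ (u.drop j₃).take p.length = p)
    (o12 : j₁ < j₂) (o23 : j₂ < j₃) : 3 ≤ occCount p u := by
  have hsub : ({j₁, j₂, j₃} : Finset ℕ) ⊆ (Finset.range (u.length + 1)).filter
      (fun i => i + p.length ≤ u.length ∧ (u.drop i).take p.length = p) := by
    intro x hx
    simp only [Finset.mem_insert, Finset.mem_singleton] at hx
    rcases hx with rfl | rfl | rfl <;>
      simp only [Finset.mem_filter, Finset.mem_range] <;>
      exact ⟨by omega, by tauto⟩
  have hcard : ({j₁, j₂, j₃} : Finset ℕ).card = 3 := by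
    rw [Finset.card_insert_of_notMem (by simp; omega),
      Finset.card_insert_of_notMem (by simp; omega), Finset.card_singleton]
  calc 3 = ({j₁, j₂, j₃} : Finset ℕ).card := hcard.symm
    _ ≤ _ := Finset.card_le_card hsub

def Eset [DecidableEq α] (v u : List α) : Finset ℕ :=
  (Finset.range (v.length + 1)).filter (fun e => u <:+ v.take e)

def Bset [DecidableEq α] (u : List α) : Finset ℕ :=
  (Finset.Ioo 0 u.length).filter (fun k => u.take k <:+ u ∧ occCount (u.take k) u = 2)

def fmap [DecidableEq α] (v u : List α) : ℕ × ℕ :=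
  if h : (Eset v u).Nonempty ∧ (Bset u).Nonempty then
    ((Eset v u).min' h.1, (Bset u).min' h.2)
  else (0, 0)

/-- core contradiction: if `u` is a proper suffix of `u'`, both having border
`p` of length `k < u.length`, and `p` occurs exactly twice in `u'`, absurd. -/
lemma aux_contra [DecidableEq α] {u u' : List α} {k : ℕ}
    (hlt : u.length < u'.length) (hsub : u <:+ u')
    (hk0 : 0 < k) (hku : k < u.length)
    (hpu : u.take k = u'.take k)
    (hsuf' : u'.take k <:+ u')
    (hocc' : occCount (u'.take k) u' = 2) : False := by
  set p := u'.take k with hp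
  have hkl : k ≤ u'.length := by omega
  have hplen : p.length = k := by
    simp [hp, Nat.min_eq_left hkl]
  have h₁ : 0 + p.length ≤ u'.length ∧ (u'.drop 0).take p.length = p := by
    constructor
    · omega
    · simp [hplen, hp]
  have hdropu : u'.drop (u'.length - u.length) = u :=
    (List.suffix_iff_eq_drop.mp hsub).symm
  have h₂ : (u'.length - u.length) + p.length ≤ u'.length ∧
      (u'.drop (u'.length - u.length)).take p.length = p := by
    constructor
    · omega
    · rw [hdropu, hplen, hpu]
  have hdropp : u'.drop (u'.length - k) = p := by
    have := List.suffix_iff_eq_drop.mp hsuf'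
    rw [hplen] at this
    exact this.symm
  have h₃ : (u'.length - k) + p.length ≤ u'.length ∧
      (u'.drop (u'.length - k)).take p.length = p := by
    constructor
    · omega
    · rw [hdropp]; exact List.take_length
  have h3 := three_le_occCount h₁ h₂ h₃ (by omega) (by omega)
  omega

lemma fmap_spec [DecidableEq α] {v u : List α} (hu : u ∈ closedFactors v)
    (h2 : 2 ≤ u.length) :
    ∃ e k, fmap v u = (e, k) ∧ e ≤ v.length ∧ u <:+ v.take e ∧ u.length ≤ e ∧
      0 < k ∧ k < u.length ∧ u.take k <:+ u ∧ occCount (u.take k) u = 2 := by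
  obtain ⟨⟨e₀, he₀, hsuf₀⟩, hcw⟩ := mem_closedFactors_iff.mp hu
  have hE : (Eset v u).Nonempty := by
    exact ⟨e₀, by simp [Eset, Finset.mem_filter, Finset.mem_range]; exact ⟨by omega, hsuf₀⟩⟩
  have hB : (Bset u).Nonempty := by
    rcases hcw with h | ⟨k₀, hk₀, hks, hko⟩
    · omega
    · exact ⟨k₀, by simp only [Bset, Finset.mem_filter]; exact ⟨hk₀, hks, hko⟩⟩
  set e := (Eset v u).min' hE with hedef
  set k := (Bset u).min' hB with hkdef
  have hemem : e ∈ Eset v u := Finset.min'_mem _ _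
  have hbmem : k ∈ Bset u := Finset.min'_mem _ _
  simp only [Eset, Finset.mem_filter, Finset.mem_range] at hemem
  simp only [Bset, Finset.mem_filter, Finset.mem_Ioo] at hbmem
  refine ⟨e, k, by rw [fmap, dif_pos ⟨hE, hB⟩], ?_, hemem.2, ?_, hbmem.1.1,
    hbmem.1.2, hbmem.2.1, hbmem.2.2⟩
  · omega
  · have := hemem.2.length_le
    rw [List.length_take] at this
    omega

lemma fmap_inj [DecidableEq α] {v u u' : List α} (hu : u ∈ closedFactors v)
    (h2 : 2 ≤ u.length) (hu' : u' ∈ closedFactors v) (h2' : 2 ≤ u'.length)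
    (heq : fmap v u = fmap v u') : u = u' := by
  obtain ⟨e, k, hf, he, hsuf, hle, hk0, hku, hbs, hbo⟩ := fmap_spec hu h2
  obtain ⟨e', k', hf', he', hsuf', hle', hk0', hku', hbs', hbo'⟩ := fmap_spec hu' h2'
  rw [hf, hf', Prod.mk.injEq] at heq
  obtain ⟨rfl, rfl⟩ := heq
  -- equal borders
  have hpu : u.take k = u'.take k := by
    refine suffix_eq_of_length_eq (hbs.trans hsuf) (hbs'.trans hsuf') ?_
    simp only [List.length_take]; omega
  rcases Nat.lt_trichotomy u.length u'.length with hlt | hl | hgt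
  · exact absurd (aux_contra hlt (List.suffix_of_suffix_length_le hsuf hsuf' hlt.le)
      hk0 hku hpu hbs' hbo') (fun h => h)
  · exact suffix_eq_of_length_eq hsuf hsuf' hl
  · exact absurd (aux_contra hgt (List.suffix_of_suffix_length_le hsuf' hsuf hgt.le)
      hk0' hku' hpu.symm hbs hbo) (fun h => h)

lemma clCount_le_of [DecidableEq α] [Fintype α] (v : List α) (K : ℕ)
    (hK : ∀ u ∈ closedFactors v, ∀ k, 0 < k → k < u.length → u.take k <:+ u →
      occCount (u.take k) u = 2 → k ≤ K) :
    clCount v ≤ (v.length - 1) * K + (Finset.univ : Finset α).card + 1 := by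
  classical
  set S := closedFactors v with hS
  have hsplit : S.card ≤ (S.filter (fun u => u.length ≤ 1)).card
      + (S.filter (fun u => ¬ u.length ≤ 1)).card := by
    rw [← Finset.card_filter_add_card_filter_not (p := fun u => u.length ≤ 1)]
  -- small part
  have hsmall : (S.filter (fun u : List α => u.length ≤ 1)).card
      ≤ (Finset.univ : Finset α).card + 1 := by
    have : (S.filter (fun u : List α => u.length ≤ 1))
        ⊆ insert [] ((Finset.univ : Finset α).image (fun a => [a])) := by
      intro u hu
      have hu1 : u.length ≤ 1 := (Finset.mem_filter.mp hu).2
      match u with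
      | [] => simp
      | [a] => simp
      | a :: b :: t => simp at hu1
    calc (S.filter (fun u : List α => u.length ≤ 1)).card
        ≤ _ := Finset.card_le_card this
      _ ≤ ((Finset.univ : Finset α).image (fun a => [a])).card + 1 :=
          Finset.card_insert_le _ _
      _ ≤ (Finset.univ : Finset α).card + 1 := by
          gcongr; exact Finset.card_image_le
  -- big part
  have hbig : (S.filter (fun u => ¬ u.length ≤ 1)).card ≤ (v.length - 1) * K := by
    have hmaps : ∀ u ∈ S.filter (fun u => ¬ u.length ≤ 1),
        fmap v u ∈ Finset.Ioo 1 (v.length + 1) ×ˢ Finset.Icc 1 K := by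
      intro u hu
      rw [Finset.mem_filter] at hu
      obtain ⟨e, k, hf, he, hsuf, hle, hk0, hku, hbs, hbo⟩ := fmap_spec hu.1 (by omega)
      rw [hf, Finset.mem_product, Finset.mem_Ioo, Finset.mem_Icc]
      exact ⟨⟨by omega, by omega⟩, by omega, hK u hu.1 k hk0 hku hbs hbo⟩
    have hcard := Finset.card_le_card_of_injOn (fmap v) hmaps (by
      intro u hu u' hu' heq
      rw [Finset.mem_coe, Finset.mem_filter] at hu hu'
      exact fmap_inj hu.1 (by omega) hu'.1 (by omega) heq)
    calc (S.filter (fun u => ¬ u.length ≤ 1)).card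
        ≤ (Finset.Ioo 1 (v.length + 1) ×ˢ Finset.Icc 1 K).card := hcard
      _ = (v.length - 1) * K := by
          rw [Finset.card_product, Nat.card_Ioo, Nat.card_Icc]
          congr 1 <;> omega
  have hcl : clCount v = S.card := rfl
  omega


@[simp] lemma length_factorAt (w : ℕ → α) (i m : ℕ) : (factorAt w i m).length = m := by
  simp [factorAt]

lemma factorAt_take (w : ℕ → α) (i m e : ℕ) (h : e ≤ m) :
    (factorAt w i m).take e = factorAt w i e := by
  simp [factorAt, ← map_take, take_range, Nat.min_eq_left h]

lemma factorAt_drop (w : ℕ → α) (i m d : ℕ) :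
    (factorAt w i m).drop d = factorAt w (i + d) (m - d) := by
  apply List.ext_getElem <;> simp [factorAt]
  intro j h1; ring_nf


/-- an ε-Beck word (ε < 1) is not closed-rich: for every C > 0, all
sufficiently long factors of length m have fewer than C·m² closed factors; in fact at
most m·log_{2-ε} m distinct closed factors. -/
theorem stmt15 (w : ℕ → Bool) (ε : ℝ) (hε0 : 0 < ε) (hε1 : ε < 1) (N : ℕ)
    (hBeck : ∀ n : ℕ, N < n → ∀ i j : ℕ,
      factorAt w i n = factorAt w j n → i < j → (2 - ε) ^ n ≤ (j : ℝ) - (i : ℝ)) :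
    ∀ C : ℝ, 0 < C → ∃ M : ℕ, ∀ m : ℕ, M ≤ m → ∀ i : ℕ,
      ((clCount (factorAt w i m) : ℝ) < C * (m : ℝ) ^ 2 ∧
       (clCount (factorAt w i m) : ℝ) ≤ (m : ℝ) * (Real.log m / Real.log (2 - ε))) := by
  intro C hC
  have hb1 : (1:ℝ) < 2 - ε := by linarith
  have hb0 : (0:ℝ) < 2 - ε := by linarith
  set c := Real.log (2 - ε) with hcdef
  have hc : 0 < c := Real.log_pos hb1
  set A : ℝ := (2 - ε) ^ (max N 3) with hAdef
  set B : ℝ := (2 / (C * c)) ^ 2 with hBdef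
  refine ⟨⌈A⌉₊ + ⌈B⌉₊ + 1, ?_⟩
  intro m hm i
  set v := factorAt w i m with hvdef
  have hvlen : v.length = m := length_factorAt w i m
  have hm1 : 1 ≤ m := by omega
  have hm0 : (0:ℝ) < m := by exact_mod_cast hm1
  have hm1' : (1:ℝ) ≤ m := by exact_mod_cast hm1
  have hAm : A ≤ (m:ℝ) := by
    have h1 : A ≤ (⌈A⌉₊ : ℝ) := Nat.le_ceil A
    have h2 : (⌈A⌉₊ : ℝ) ≤ (m : ℝ) := by exact_mod_cast (by omega : ⌈A⌉₊ ≤ m)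
    linarith
  have hBm : B < (m:ℝ) := by
    have h1 : B ≤ (⌈B⌉₊ : ℝ) := Nat.le_ceil B
    have h2 : (⌈B⌉₊ : ℝ) < (m : ℝ) := by exact_mod_cast (by omega : ⌈B⌉₊ < m)
    linarith
  set L : ℝ := Real.log m / c with hLdef
  have hL3 : ((max N 3 : ℕ) : ℝ) ≤ L := by
    rw [hLdef, le_div_iff₀ hc]
    have := Real.log_le_log (by positivity) hAm
    rwa [hAdef, Real.log_pow] at this
  -- bound on border lengths
  have hKbound : ∀ u ∈ closedFactors v, ∀ k, 0 < k → k < u.length → u.take k <:+ u →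
      occCount (u.take k) u = 2 → k ≤ ⌊L⌋₊ := by
    intro u hu k hk0 hku hs ho
    apply Nat.le_floor
    by_cases hkN : k ≤ N
    · have h1 : ((N:ℕ):ℝ) ≤ ((max N 3 : ℕ):ℝ) := by exact_mod_cast Nat.le_max_left N 3
      have h2 : (k:ℝ) ≤ (N:ℝ) := by exact_mod_cast hkN
      linarith
    · -- Beck argument
      obtain ⟨⟨e, he, hsuf⟩, _⟩ := mem_closedFactors_iff.mp hu
      rw [hvlen] at he
      have hetake : v.take e = factorAt w i e := factorAt_take w i m e he
      have hul : u.length ≤ e := by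
        have := hsuf.length_le
        rwa [List.length_take, hvlen, Nat.min_eq_left he] at this
      set s := i + (e - u.length) with hsdef
      have hu_eq : u = factorAt w s u.length := by
        have hd := List.suffix_iff_eq_drop.mp hsuf
        rw [hetake, factorAt_drop, length_factorAt] at hd
        have harg : e - (e - u.length) = u.length := by omega
        rw [harg] at hd
        exact hd
      have hp1 : u.take k = factorAt w s k := by
        have h1 : (factorAt w s u.length).take k = factorAt w s k :=
          factorAt_take w s u.length k (by omega)
        rw [← hu_eq] at h1
        exact h1
      have hp2 : u.take k = factorAt w (s + (u.length - k)) k := by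
        have hd := List.suffix_iff_eq_drop.mp hs
        rw [List.length_take, Nat.min_eq_left (by omega : k ≤ u.length)] at hd
        have h1 : (factorAt w s u.length).drop (u.length - k)
            = factorAt w (s + (u.length - k)) (u.length - (u.length - k)) :=
          factorAt_drop w s u.length (u.length - k)
        have h2 : u.length - (u.length - k) = k := by omega
        rw [h2] at h1
        rw [← hu_eq] at h1
        exact hd.trans h1
      have hlt : s < s + (u.length - k) := by omega
      have hbk := hBeck k (by omega) s (s + (u.length - k)) (hp1.symm.trans hp2) hlt
      have hcast : ((s + (u.length - k) : ℕ) : ℝ) - (s:ℝ) = ((u.length - k : ℕ) : ℝ) := by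
        push_cast
        ring
      rw [hcast] at hbk
      have hle_m : ((u.length - k : ℕ) : ℝ) ≤ (m:ℝ) := by
        exact_mod_cast (by omega : u.length - k ≤ m)
      have hpow : (2 - ε) ^ k ≤ (m:ℝ) := le_trans hbk hle_m
      have hlog := Real.log_le_log (by positivity) hpow
      rw [Real.log_pow] at hlog
      rw [hLdef, le_div_iff₀ hc]
      exact hlog
  have hcount := clCount_le_of v ⌊L⌋₊ hKbound
  rw [hvlen] at hcount
  have hcardBool : (Finset.univ : Finset Bool).card = 2 := by simp
  rw [hcardBool] at hcount
  -- cast to ℝ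
  have hKL : (⌊L⌋₊ : ℝ) ≤ L := Nat.floor_le (by positivity)
  have hLge3 : (3:ℝ) ≤ L := by
    have h3 : ((3:ℕ):ℝ) ≤ ((max N 3 : ℕ):ℝ) := by exact_mod_cast Nat.le_max_right N 3
    have h3' : ((3:ℕ):ℝ) = (3:ℝ) := by norm_num
    linarith [hL3]
  have hreal : (clCount v : ℝ) ≤ ((m:ℝ) - 1) * (⌊L⌋₊:ℝ) + 3 := by
    have h1 : (clCount v : ℝ) ≤ (((m - 1) * ⌊L⌋₊ + 2 + 1 : ℕ) : ℝ) := by exact_mod_cast hcount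
    push_cast [Nat.cast_sub hm1] at h1
    linarith
  have hmain : (clCount v : ℝ) ≤ (m:ℝ) * L := by
    have h1 : ((m:ℝ) - 1) * (⌊L⌋₊:ℝ) ≤ ((m:ℝ) - 1) * L := by
      apply mul_le_mul_of_nonneg_left hKL
      linarith
    nlinarith
  refine ⟨?_, hmain⟩
  -- strict bound
  have hs0 : (0:ℝ) < Real.sqrt m := Real.sqrt_pos.mpr hm0
  have hsq : Real.sqrt m * Real.sqrt m = (m:ℝ) := Real.mul_self_sqrt (by positivity)
  have hsqrtB : 2 / (C * c) < Real.sqrt m := by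
    rw [show (2:ℝ) / (C * c) = Real.sqrt B by
      rw [hBdef, Real.sqrt_sq (by positivity)]]
    exact Real.sqrt_lt_sqrt (by positivity) hBm
  have hlogm : Real.log m ≤ 2 * (Real.sqrt m - 1) := by
    have h1 : Real.log (Real.sqrt m) = Real.log m / 2 := Real.log_sqrt (by positivity)
    have h2 : Real.log (Real.sqrt m) ≤ Real.sqrt m - 1 := Real.log_le_sub_one_of_pos hs0
    linarith
  have hCc : (0:ℝ) < C * c := by positivity
  have hlt2 : Real.log m < C * c * (m:ℝ) := by
    have h1 : 2 < C * c * Real.sqrt m := by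
      rw [div_lt_iff₀ hCc] at hsqrtB
      linarith [hsqrtB]
    nlinarith [hs0, hsq]
  have hLlt : L < C * (m:ℝ) := by
    rw [hLdef, div_lt_iff₀ hc]
    linarith [hlt2]
  calc (clCount v : ℝ) ≤ (m:ℝ) * L := hmain
    _ < (m:ℝ) * (C * (m:ℝ)) := by
        exact mul_lt_mul_of_pos_left hLlt hm0
    _ = C * (m:ℝ) ^ 2 := by ring
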